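/- Let G be the generalized Paley graph P(q,k) on F_q with q = p^n ≡ 1 (mod 2k), let θ generate F_q^×, fix a₁,...,a_{n−1} ∈ F_p not all zero, and set S = { b + a₁θ + ... + a_{n−1}θ^{n−1} : b ∈ F_p }. Let N₀ = Γ(0) \ (∇ ∪ {1}) and N₁ = Γ(1) \ (∇ ∪ {0}) where Γ(v) = v + (F_q^×)^k and ∇ = Γ(0) ∩ Γ(1). Then |N₀ ∩ S| = |N₁ ∩ S|. -/
import Mathlib

/-- Neighbor set of `v` in the generalized Paley graph `P(q,k)`:
`Γ(v) = v + (F_q^×)^k`. -/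
def paleyGamma (p n k : ℕ) [Fact p.Prime] (v : GaloisField p n) :
    Set (GaloisField p n) :=
  {x | ∃ c : GaloisField p n, c ≠ 0 ∧ c ^ k = x - v}

open Polynomial in
theorem stmt17 (p n k : ℕ) [Fact p.Prime] (hk : 2 ≤ k)
    (hq : p ^ n ≡ 1 [MOD 2 * k]) (θ : GaloisField p n)
    (hθ : ∀ x : GaloisField p n, x ≠ 0 → ∃ j : ℕ, θ ^ j = x)
    (a : ℕ → ZMod p) (ha : ∃ i, 1 ≤ i ∧ i < n ∧ a i ≠ 0)
    (S : Set (GaloisField p n))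
    (hS : S = {x | ∃ b : ZMod p, x = algebraMap (ZMod p) (GaloisField p n) b +
      ∑ i ∈ Finset.Ico 1 n, algebraMap (ZMod p) (GaloisField p n) (a i) * θ ^ i})
    (N₀ N₁ : Set (GaloisField p n))
    (hN₀ : N₀ = paleyGamma p n k 0 \ ((paleyGamma p n k 0 ∩ paleyGamma p n k 1) ∪ {1}))
    (hN₁ : N₁ = paleyGamma p n k 1 \ ((paleyGamma p n k 0 ∩ paleyGamma p n k 1) ∪ {0})) :
    (N₀ ∩ S).ncard = (N₁ ∩ S).ncard := by
  obtain ⟨i₀, hi₀1, hi₀n, hai₀⟩ := ha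
  have hn : n ≠ 0 := by omega
  set T : GaloisField p n := ∑ i ∈ Finset.Ico 1 n, algebraMap (ZMod p) (GaloisField p n) (a i) * θ ^ i with hT
  -- θ generates K as a field extension of F
  have hadj : IntermediateField.adjoin (ZMod p) {θ} = ⊤ := by
    rw [eq_top_iff]
    intro x _
    by_cases hx : x = 0
    · exact hx ▸ zero_mem _
    · obtain ⟨j, hj⟩ := hθ x hx
      rw [← hj]
      exact pow_mem (IntermediateField.mem_adjoin_simple_self (ZMod p) θ) j
  have hint : IsIntegral (ZMod p) θ := Algebra.IsIntegral.isIntegral θ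
  have hdeg : (minpoly (ZMod p) θ).natDegree = n := by
    have h1 : Module.finrank (ZMod p) (IntermediateField.adjoin (ZMod p) {θ}) =
        (minpoly (ZMod p) θ).natDegree := IntermediateField.adjoin.finrank hint
    have h2 : Module.finrank (ZMod p) (IntermediateField.adjoin (ZMod p) {θ}) =
        Module.finrank (ZMod p) (GaloisField p n) := by
      refine LinearEquiv.finrank_eq ?_
      exact ((IntermediateField.equivOfEq hadj).trans
        IntermediateField.topEquiv).toLinearEquiv
    rw [h1.symm, h2, GaloisField.finrank p hn]
  -- T is not in the image of F
  have hTnot : ∀ c : ZMod p, T ≠ algebraMap (ZMod p) (GaloisField p n) c := by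
    intro c hc
    set q : (ZMod p)[X] := (∑ i ∈ Finset.Ico 1 n, C (a i) * X ^ i) - C c with hqdef
    have hq0 : aeval θ q = 0 := by
      simp [hqdef, map_sub, map_sum, ← hc, hT]
    have hqne : q ≠ 0 := by
      intro h
      have := congrArg (fun r => Polynomial.coeff r i₀) h
      simp only [hqdef, Polynomial.coeff_sub, Polynomial.finset_sum_coeff,
        Polynomial.coeff_C_mul, Polynomial.coeff_X_pow, Polynomial.coeff_C,
        Polynomial.coeff_zero] at this
      rw [Finset.sum_eq_single i₀] at this
      · simp [if_neg (by omega : ¬ i₀ = 0)] at this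
        exact hai₀ this
      · intro b _ hb; simp [hb.symm, Ne.symm hb]
      · intro h; exact absurd (Finset.mem_Ico.mpr ⟨hi₀1, hi₀n⟩) h
    have hdvd := minpoly.dvd (ZMod p) θ hq0
    have hle := Polynomial.natDegree_le_of_dvd hdvd hqne
    have hqdeg : q.natDegree < n := by
      rw [hqdef]
      have h1 : (∑ i ∈ Finset.Ico 1 n, C (a i) * X ^ i : (ZMod p)[X]).natDegree ≤ n - 1 := by
        refine Polynomial.natDegree_sum_le_of_forall_le _ _ ?_
        intro i hi
        refine le_trans (Polynomial.natDegree_C_mul_le _ _) ?_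
        simp only [Polynomial.natDegree_X_pow]
        exact Nat.le_sub_one_of_lt (Finset.mem_Ico.mp hi).2
      have := Polynomial.natDegree_sub_le (∑ i ∈ Finset.Ico 1 n, C (a i) * X ^ i) (C c)
      simp only [Polynomial.natDegree_C, Nat.max_zero] at this
      omega
    omega
  -- elements of S are not 0 or 1
  have hS0 : (0 : GaloisField p n) ∉ S := by
    rw [hS]; rintro ⟨b, hb⟩
    exact hTnot (-b) (by rw [map_neg]; linear_combination -hb)
  have hS1 : (1 : GaloisField p n) ∉ S := by
    rw [hS]; rintro ⟨b, hb⟩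
    exact hTnot (1 - b) (by rw [map_sub, map_one]; linear_combination -hb)
  set Γ0 := paleyGamma p n k 0
  set Γ1 := paleyGamma p n k 1
  have hfin : ∀ A : Set (GaloisField p n), A.Finite := fun A => Set.toFinite A
  have key : Γ0 ∩ Γ1 ∩ S ⊆ Γ0 ∩ S := fun x hx => ⟨hx.1.1, hx.2⟩
  have key' : Γ0 ∩ Γ1 ∩ S ⊆ Γ1 ∩ S := fun x hx => ⟨hx.1.2, hx.2⟩
  have e0 : N₀ ∩ S = (Γ0 ∩ S) \ (Γ0 ∩ Γ1 ∩ S) := by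
    rw [hN₀]; ext x
    simp only [Set.mem_inter_iff, Set.mem_diff, Set.mem_union, Set.mem_singleton_iff,
      Set.mem_inter_iff]
    constructor
    · rintro ⟨⟨h0, hn⟩, hs⟩
      exact ⟨⟨h0, hs⟩, fun h => hn (Or.inl ⟨h.1.1, h.1.2⟩)⟩
    · rintro ⟨⟨h0, hs⟩, hn⟩
      refine ⟨⟨h0, ?_⟩, hs⟩
      rintro (h | h)
      · exact hn ⟨⟨h.1, h.2⟩, hs⟩
      · rw [h] at hs; exact hS1 hs
  have e1 : N₁ ∩ S = (Γ1 ∩ S) \ (Γ0 ∩ Γ1 ∩ S) := by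
    rw [hN₁]; ext x
    simp only [Set.mem_inter_iff, Set.mem_diff, Set.mem_union, Set.mem_singleton_iff,
      Set.mem_inter_iff]
    constructor
    · rintro ⟨⟨h0, hn⟩, hs⟩
      exact ⟨⟨h0, hs⟩, fun h => hn (Or.inl ⟨h.1.1, h.1.2⟩)⟩
    · rintro ⟨⟨h0, hs⟩, hn⟩
      refine ⟨⟨h0, ?_⟩, hs⟩
      rintro (h | h)
      · exact hn ⟨⟨h.1, h.2⟩, hs⟩
      · rw [h] at hs; exact hS0 hs
  -- main bijection
  have himg : (fun x : GaloisField p n => x + 1) '' (Γ0 ∩ S) = Γ1 ∩ S := by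
    ext y
    constructor
    · rintro ⟨x, ⟨⟨c, hc, hck⟩, hxS⟩, rfl⟩
      refine ⟨⟨c, hc, by rw [hck]; ring⟩, ?_⟩
      rw [hS] at hxS ⊢
      obtain ⟨b, hb⟩ := hxS
      exact ⟨b + 1, by rw [map_add, map_one]; linear_combination hb⟩
    · rintro ⟨⟨c, hc, hck⟩, hyS⟩
      refine ⟨y - 1, ⟨⟨c, hc, by rw [hck]; ring⟩, ?_⟩, by ring⟩
      rw [hS] at hyS ⊢
      obtain ⟨b, hb⟩ := hyS
      exact ⟨b - 1, by rw [map_sub, map_one]; linear_combination hb⟩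
  have hcard : (Γ0 ∩ S).ncard = (Γ1 ∩ S).ncard := by
    rw [← himg]
    exact (Set.ncard_image_of_injective _ (add_left_injective 1)).symm
  rw [e0, e1, Set.ncard_diff key (hfin _), Set.ncard_diff key' (hfin _), hcard]
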